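/- Let d ≥ 1 be an integer, Δ ≥ 0 a real, and g : ℝ^d → {0,1} a predicate such that ‖v‖₂ ≤ Δ for every v ∈ ℝ^d with g(v) = 1. Let V be a finite multiset of vectors in ℝ^d with m = #{v ∈ V : g(v) = 1} ≥ 1, and let u, v ∈ ℝ^d. Then ‖avg_g(V ⊎ {u}) − avg_g(V ⊎ {v})‖₂ ≤ 4Δ/(m+1), where V ⊎ {x} is the multiset obtained from V by adding the element x. -/

import Mathlib

lemma avgg_aux {E : Type*} [NormedAddCommGroup E] [NormedSpace ℝ E]
    (M Δ : ℝ) (hM : 1 ≤ M) (S x : E) (hS : ‖S‖ ≤ M * Δ) (hx : ‖x‖ ≤ Δ) :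
    ‖M⁻¹ • S - (M + 1)⁻¹ • (x + S)‖ ≤ 4 * Δ / (M + 1) := by
  have hΔ : 0 ≤ Δ := le_trans (norm_nonneg x) hx
  have hM0 : (0:ℝ) < M := by linarith
  have hM1 : (0:ℝ) < M + 1 := by linarith
  have heq : M⁻¹ • S - (M + 1)⁻¹ • (x + S)
      = (M⁻¹ - (M + 1)⁻¹) • S - (M + 1)⁻¹ • x := by
    rw [smul_add, sub_smul]; abel
  have hc : M⁻¹ - (M + 1)⁻¹ = (M * (M + 1))⁻¹ := by
    field_simp; ring
  have h1 : ‖(M⁻¹ - (M + 1)⁻¹) • S‖ ≤ Δ / (M + 1) := by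
    rw [norm_smul, Real.norm_eq_abs, hc, abs_of_nonneg (by positivity)]
    calc (M * (M + 1))⁻¹ * ‖S‖ ≤ (M * (M + 1))⁻¹ * (M * Δ) := by
          apply mul_le_mul_of_nonneg_left hS (by positivity)
    _ = Δ / (M + 1) := by field_simp
  have h2 : ‖(M + 1)⁻¹ • x‖ ≤ Δ / (M + 1) := by
    rw [norm_smul, Real.norm_eq_abs, abs_of_nonneg (by positivity)]
    rw [div_eq_inv_mul]
    exact mul_le_mul_of_nonneg_left hx (by positivity)
  calc ‖M⁻¹ • S - (M + 1)⁻¹ • (x + S)‖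
      ≤ ‖(M⁻¹ - (M + 1)⁻¹) • S‖ + ‖(M + 1)⁻¹ • x‖ := by rw [heq]; exact norm_sub_le _ _
  _ ≤ Δ / (M + 1) + Δ / (M + 1) := add_le_add h1 h2
  _ ≤ 4 * Δ / (M + 1) := by
      rw [← add_div, div_le_div_iff₀ hM1 hM1]
      nlinarith

/-- The average of the elements of the multiset `V` satisfying the predicate `g`. -/
noncomputable def avgg {d : ℕ} (g : EuclideanSpace ℝ (Fin d) → Bool)
    (V : Multiset (EuclideanSpace ℝ (Fin d))) : EuclideanSpace ℝ (Fin d) :=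
  ((Multiset.card (V.filter fun v => g v = true) : ℝ))⁻¹ •
    (V.filter fun v => g v = true).sum

theorem avgg_swap_sensitivity (d : ℕ) (hd : 1 ≤ d) (Δ : ℝ) (hΔ : 0 ≤ Δ)
    (g : EuclideanSpace ℝ (Fin d) → Bool)
    (hg : ∀ x, g x = true → ‖x‖ ≤ Δ)
    (V : Multiset (EuclideanSpace ℝ (Fin d))) (m : ℕ)
    (hm : m = Multiset.card (V.filter fun x => g x = true)) (hm1 : 1 ≤ m)
    (u v : EuclideanSpace ℝ (Fin d)) :
    ‖avgg g (u ::ₘ V) - avgg g (v ::ₘ V)‖ ≤ 4 * Δ / (m + 1) := by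
  have hM : (1:ℝ) ≤ m := by exact_mod_cast hm1
  have hM0 : (0:ℝ) < m := by linarith
  have hM1 : (0:ℝ) < (m:ℝ) + 1 := by linarith
  set S := (Multiset.filter (fun x => g x = true) V).sum with hSdef
  have hS : ‖S‖ ≤ m * Δ := by
    calc ‖S‖ ≤ ((Multiset.filter (fun x => g x = true) V).map norm).sum :=
          norm_multiset_sum_le _
    _ ≤ Multiset.card ((Multiset.filter (fun x => g x = true) V).map norm) • Δ := by
        apply Multiset.sum_le_card_nsmul
        intro x hx
        obtain ⟨y, hy, rfl⟩ := Multiset.mem_map.mp hx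
        exact hg y (Multiset.mem_filter.mp hy).2
    _ = m * Δ := by rw [Multiset.card_map, ← hm, nsmul_eq_mul]
  have hcard : (Multiset.card (Multiset.filter (fun x => g x = true) V) : ℝ) = m := by
    exact_mod_cast hm.symm
  unfold avgg
  rcases Bool.eq_false_or_eq_true (g u) with hu | hu <;>
    rcases Bool.eq_false_or_eq_true (g v) with hv | hv
  · rw [Multiset.filter_cons_of_pos _ (by simp [hu]),
      Multiset.filter_cons_of_pos _ (by simp [hv]),
      ]
    simp only [Multiset.card_cons, Multiset.sum_cons]
    push_cast
    rw [hcard]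
    have heq : ((m:ℝ) + 1)⁻¹ • (u + S) - ((m:ℝ) + 1)⁻¹ • (v + S)
        = ((m:ℝ) + 1)⁻¹ • (u - v) := by
      rw [← smul_sub]; congr 1; abel
    rw [heq, norm_smul, Real.norm_eq_abs, abs_of_nonneg (by positivity)]
    calc ((m:ℝ) + 1)⁻¹ * ‖u - v‖ ≤ ((m:ℝ) + 1)⁻¹ * (2 * Δ) := by
          apply mul_le_mul_of_nonneg_left ?_ (by positivity)
          calc ‖u - v‖ ≤ ‖u‖ + ‖v‖ := norm_sub_le _ _
          _ ≤ 2 * Δ := by have := hg u hu; have := hg v hv; linarith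
    _ ≤ 4 * Δ / (m + 1) := by
        rw [inv_mul_eq_div, div_le_div_iff₀ hM1 hM1]
        nlinarith
  · rw [Multiset.filter_cons_of_pos _ (by simp [hu]),
      Multiset.filter_cons_of_neg _ (by simp [hv]),
      ]
    simp only [Multiset.card_cons, Multiset.sum_cons]
    push_cast
    rw [hcard]
    rw [norm_sub_rev]
    exact avgg_aux (m:ℝ) Δ hM S u hS (hg u hu)
  · rw [Multiset.filter_cons_of_neg _ (by simp [hu]),
      Multiset.filter_cons_of_pos _ (by simp [hv]),
      ]
    simp only [Multiset.card_cons, Multiset.sum_cons]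
    push_cast
    rw [hcard]
    exact avgg_aux (m:ℝ) Δ hM S v hS (hg v hv)
  · rw [Multiset.filter_cons_of_neg _ (by simp [hu]),
      Multiset.filter_cons_of_neg _ (by simp [hv])]
    simp only [sub_self, norm_zero]
    positivity
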